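/- Let x solve dx/dr = -(2/t) x (x - (1 - 2t²/ν²)) on its maximal interval of existence, with t > 0 and 0 < 1 - 2t²/ν² < 1. If x(r₀) > 0 for some r₀ > 0, then for any r₁ > r₀ and all r in [r₀, r₁] one has min{x(r₀), inf_{[r₀,r₁]}(1 - 2t²/ν²)} ≤ x(r) ≤ max{x(r₀), sup_{[r₀,r₁]}(1 - 2t²/ν²)}; in particular x is bounded on compact intervals and extends to all of (0,∞). -/

import Mathlib

open Set

theorem spin7_instanton_bounds (t ν x : ℝ → ℝ)
    (htc : ContinuousOn t (Ioi 0)) (hνc : ContinuousOn ν (Ioi 0))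
    (htpos : ∀ r > 0, 0 < t r)
    (hh : ∀ r > 0, 0 < 1 - 2 * t r ^ 2 / ν r ^ 2 ∧ 1 - 2 * t r ^ 2 / ν r ^ 2 < 1)
    (hx : ∀ r > 0,
      HasDerivAt x (-(2 / t r) * x r * (x r - (1 - 2 * t r ^ 2 / ν r ^ 2))) r) :
    ∀ r₀ > 0, 0 < x r₀ → ∀ r₁ > r₀, ∀ r ∈ Icc r₀ r₁,
      min (x r₀) (sInf ((fun s => 1 - 2 * t s ^ 2 / ν s ^ 2) '' Icc r₀ r₁)) ≤ x r ∧
      x r ≤ max (x r₀) (sSup ((fun s => 1 - 2 * t s ^ 2 / ν s ^ 2) '' Icc r₀ r₁)) := by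
  intro r₀ hr₀ hx₀ r₁ hr₁ r hr
  set h : ℝ → ℝ := fun s => 1 - 2 * t s ^ 2 / ν s ^ 2 with hdef
  have hsub : Icc r₀ r₁ ⊆ Ioi 0 := fun s hs => lt_of_lt_of_le hr₀ hs.1
  have hν : ∀ s ∈ Icc r₀ r₁, ν s ≠ 0 := by
    intro s hs hzero
    have := (hh s (hsub hs)).2
    simp [hzero] at this
  have hcont : ContinuousOn h (Icc r₀ r₁) := by
    apply ContinuousOn.sub continuousOn_const
    exact ContinuousOn.div (continuousOn_const.mul (((htc.mono hsub).pow 2)))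
      ((hνc.mono hsub).pow 2) (fun s hs => pow_ne_zero 2 (hν s hs))
  have hxc : ContinuousOn x (Icc r₀ r₁) := fun s hs =>
    ((hx s (hsub hs)).continuousAt).continuousWithinAt
  have hne : ((fun s => 1 - 2 * t s ^ 2 / ν s ^ 2) '' Icc r₀ r₁).Nonempty :=
    (nonempty_Icc.2 (le_of_lt hr₁)).image _
  have hK : IsCompact ((fun s => 1 - 2 * t s ^ 2 / ν s ^ 2) '' Icc r₀ r₁) :=
    isCompact_Icc.image_of_continuousOn hcont
  set m := sInf ((fun s => 1 - 2 * t s ^ 2 / ν s ^ 2) '' Icc r₀ r₁) with mdef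
  set M := sSup ((fun s => 1 - 2 * t s ^ 2 / ν s ^ 2) '' Icc r₀ r₁) with Mdef
  have hm_le : ∀ s ∈ Icc r₀ r₁, m ≤ h s := fun s hs =>
    csInf_le hK.bddBelow ⟨s, hs, rfl⟩
  have hle_M : ∀ s ∈ Icc r₀ r₁, h s ≤ M := fun s hs =>
    le_csSup hK.bddAbove ⟨s, hs, rfl⟩
  have hm_pos : 0 < m := by
    obtain ⟨s, hs, hseq⟩ := hK.sInf_mem hne
    rw [← mdef] at hseq
    rw [← hseq]
    exact (hh s (hsub hs)).1
  set L := min (x r₀) m with Ldef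
  set U := max (x r₀) M with Udef
  have hL_pos : 0 < L := lt_min hx₀ hm_pos
  have hf' : ∀ s ∈ Ico r₀ r₁,
      HasDerivWithinAt x (-(2 / t s) * x s * (x s - h s)) (Ici s) s := fun s hs =>
    (hx s (hsub ⟨hs.1, le_of_lt hs.2⟩)).hasDerivWithinAt
  -- Upper bound
  have upper : x r ≤ U := by
    apply le_of_forall_pos_le_add
    intro ε hε
    have key : ∀ ⦃z⦄, z ∈ Icc r₀ r₁ → x z ≤ (fun _ : ℝ => U + ε) z := by
      apply image_le_of_deriv_right_lt_deriv_boundary (f' := fun s => -(2 / t s) * x s * (x s - h s))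
        (B' := fun _ => 0) hxc hf' _ (fun _ => hasDerivAt_const _ _)
      · intro s hs heq
        have hs' : s ∈ Icc r₀ r₁ := ⟨hs.1, le_of_lt hs.2⟩
        have hspos : (0 : ℝ) < s := hsub hs'
        have hxs_pos : 0 < x s := by
          rw [heq]
          exact lt_of_lt_of_le hx₀ (le_trans (le_max_left _ _) (le_add_of_nonneg_right hε.le))
        have hdiff : 0 < x s - h s := by
          have : h s ≤ U := le_trans (hle_M s hs') (le_max_right _ _)
          rw [heq]; linarith
        have ht2 : 0 < 2 / t s := div_pos two_pos (htpos s hspos)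
        have : 0 < 2 / t s * x s * (x s - h s) := by positivity
        nlinarith
      · exact le_trans (le_max_left _ _) (le_add_of_nonneg_right hε.le)
    exact key hr
  -- Lower bound
  have lower : L ≤ x r := by
    by_contra hcon
    push_neg at hcon
    set ε := min ((L - x r) / 2) (L / 2) with εdef
    have hε : 0 < ε := lt_min (by linarith) (by linarith)
    have hεL : ε < L := lt_of_le_of_lt (min_le_right _ _) (by linarith)
    have key : ∀ ⦃z⦄, z ∈ Icc r₀ r₁ → (fun s => -x s) z ≤ (fun _ : ℝ => -L + ε) z := by
      apply image_le_of_deriv_right_lt_deriv_boundary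
        (f' := fun s => -(-(2 / t s) * x s * (x s - h s)))
        (B' := fun _ => 0) hxc.neg (fun s hs => (hf' s hs).neg) _
        (fun _ => hasDerivAt_const _ _)
      · intro s hs heq
        have hs' : s ∈ Icc r₀ r₁ := ⟨hs.1, le_of_lt hs.2⟩
        have hspos : (0 : ℝ) < s := hsub hs'
        have hxval : x s = L - ε := by rw [Pi.neg_apply] at heq; linarith
        have hxs_pos : 0 < x s := by rw [hxval]; linarith
        have hdiff : x s - h s < 0 := by
          have h1 : L ≤ h s := le_trans (min_le_right _ _) (hm_le s hs')
          rw [hxval]; linarith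
        have ht2 : 0 < 2 / t s := div_pos two_pos (htpos s hspos)
        have hpos : 0 < h s - x s := by linarith
        have : 0 < 2 / t s * x s * (h s - x s) := mul_pos (mul_pos ht2 hxs_pos) hpos
        nlinarith
      · have : L ≤ x r₀ := min_le_left _ _
        show -x r₀ ≤ -L + ε
        linarith
    have h1 := key hr
    have h2 : ε ≤ (L - x r) / 2 := min_le_left _ _
    simp only at h1
    linarith
  exact ⟨lower, upper⟩
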